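/- Let G be a simple graph on d ≥ 1 vertices and cr(G) its corona. Then every minimal monomial generator of J(cr(G))^(n) has degree exactly dn, for all n ≥ 1. -/

import Mathlib

/-- The corona `cr(G)` of a graph `G` on `Fin d`: attach one pendant vertex
`Sum.inr i` to each vertex `Sum.inl i` of `G`. -/
def corona {d : ℕ} (G : SimpleGraph (Fin d)) : SimpleGraph (Fin d ⊕ Fin d) where
  Adj u v :=
    match u, v with
    | Sum.inl i, Sum.inl j => G.Adj i j
    | Sum.inl i, Sum.inr j => i = j
    | Sum.inr i, Sum.inl j => i = j
    | Sum.inr _, Sum.inr _ => False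
  symm := by
    constructor
    rintro (i | i) (j | j) h
    · exact G.adj_symm h
    · exact h.symm
    · exact h.symm
    · exact h.elim
  loopless := by
    constructor
    rintro (i | i) h
    · exact G.loopless.irrefl i h
    · exact h

/-- Monomial membership in the `n`-th symbolic power of the cover ideal:
`x^α ∈ J(G)⁽ⁿ⁾ = ⋂_{ij ∈ E(G)} (xᵢ,xⱼ)ⁿ` iff `α i + α j ≥ n` for every edge `ij`. -/
def memSymbCover {V : Type*} (G : SimpleGraph V) (n : ℕ) (α : V → ℕ) : Prop :=
  ∀ i j, G.Adj i j → n ≤ α i + α j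

/-- `x^α` is a minimal monomial generator of `J(G)⁽ⁿ⁾`. -/
def isMinGenSymbCover {V : Type*} (G : SimpleGraph V) (n : ℕ) (α : V → ℕ) : Prop :=
  memSymbCover G n α ∧ ∀ β : V → ℕ, β ≤ α → β ≠ α → ¬ memSymbCover G n β

/-- for a graph `G` on `d ≥ 1` vertices, every minimal monomial
generator of `J(cr(G))⁽ⁿ⁾` has degree exactly `d·n`, for all `n ≥ 1`. -/
theorem minGen_symbolic_power_cover_corona_degree
    {d : ℕ} (hd : 1 ≤ d) (G : SimpleGraph (Fin d))
    (n : ℕ) (hn : 1 ≤ n)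
    (α : (Fin d ⊕ Fin d) → ℕ)
    (hα : isMinGenSymbCover (corona G) n α) :
    ∑ u, α u = d * n := by
  have key : ∀ i : Fin d, α (Sum.inl i) + α (Sum.inr i) = n := by
    intro i
    have hge : n ≤ α (Sum.inl i) + α (Sum.inr i) := hα.1 (Sum.inl i) (Sum.inr i) rfl
    by_contra hne
    have hgt : n < α (Sum.inl i) + α (Sum.inr i) := lt_of_le_of_ne hge (fun h => hne h.symm)
    rcases Nat.eq_zero_or_pos (α (Sum.inr i)) with h0 | hpos
    · -- decrease α at inl i
      have hbig : n < α (Sum.inl i) := by omega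
      set β := Function.update α (Sum.inl i) (α (Sum.inl i) - 1) with hβ
      apply hα.2 β
      · intro u
        by_cases hu : u = Sum.inl i
        · subst hu; simp [hβ]
        · simp [hβ, Function.update_of_ne hu]
      · intro h
        have := congrFun h (Sum.inl i)
        simp [hβ] at this
        omega
      · rintro (j | j) (k | k) hadj
        · by_cases hj : (Sum.inl j : Fin d ⊕ Fin d) = Sum.inl i
          · have hβj : n ≤ β (Sum.inl j) := by
              rw [hj]; simp [hβ]; omega
            omega
          · by_cases hk : (Sum.inl k : Fin d ⊕ Fin d) = Sum.inl i
            · have hβk : n ≤ β (Sum.inl k) := by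
                rw [hk]; simp [hβ]; omega
              omega
            · have := hα.1 (Sum.inl j) (Sum.inl k) hadj
              simp only [hβ, Function.update_of_ne hj, Function.update_of_ne hk]
              omega
        · -- inl j, inr k : j = k
          cases hadj
          by_cases hj : (Sum.inl j : Fin d ⊕ Fin d) = Sum.inl i
          · have : j = i := by injection hj
            subst this
            simp [hβ, Function.update_of_ne (by simp : (Sum.inr j : Fin d ⊕ Fin d) ≠ Sum.inl j)]
            omega
          · have := hα.1 (Sum.inl j) (Sum.inr j) rfl
            simp only [hβ, Function.update_of_ne hj,
              Function.update_of_ne (by simp : (Sum.inr j : Fin d ⊕ Fin d) ≠ Sum.inl i)]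
            omega
        · cases hadj
          by_cases hk : (Sum.inl j : Fin d ⊕ Fin d) = Sum.inl i
          · have : j = i := by injection hk
            subst this
            simp [hβ, Function.update_of_ne (by simp : (Sum.inr j : Fin d ⊕ Fin d) ≠ Sum.inl j)]
            omega
          · have := hα.1 (Sum.inl j) (Sum.inr j) rfl
            simp only [hβ, Function.update_of_ne hk,
              Function.update_of_ne (by simp : (Sum.inr j : Fin d ⊕ Fin d) ≠ Sum.inl i)]
            omega
        · exact hadj.elim
    · -- decrease α at inr i
      set β := Function.update α (Sum.inr i) (α (Sum.inr i) - 1) with hβ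
      apply hα.2 β
      · intro u
        by_cases hu : u = Sum.inr i
        · subst hu; simp [hβ]
        · simp [hβ, Function.update_of_ne hu]
      · intro h
        have := congrFun h (Sum.inr i)
        simp [hβ] at this
        omega
      · rintro (j | j) (k | k) hadj
        · have := hα.1 (Sum.inl j) (Sum.inl k) hadj
          simp only [hβ, Function.update_of_ne (by simp : (Sum.inl j : Fin d ⊕ Fin d) ≠ Sum.inr i),
            Function.update_of_ne (by simp : (Sum.inl k : Fin d ⊕ Fin d) ≠ Sum.inr i)]
          omega
        · cases hadj
          by_cases hk : j = i
          · subst hk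
            simp [hβ, Function.update_of_ne (by simp : (Sum.inl j : Fin d ⊕ Fin d) ≠ Sum.inr j)]
            omega
          · have := hα.1 (Sum.inl j) (Sum.inr j) rfl
            simp only [hβ, Function.update_of_ne (by simp : (Sum.inl j : Fin d ⊕ Fin d) ≠ Sum.inr i),
              Function.update_of_ne (by simp [hk] : (Sum.inr j : Fin d ⊕ Fin d) ≠ Sum.inr i)]
            omega
        · cases hadj
          by_cases hk : j = i
          · subst hk
            simp [hβ, Function.update_of_ne (by simp : (Sum.inl j : Fin d ⊕ Fin d) ≠ Sum.inr j)]
            omega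
          · have := hα.1 (Sum.inl j) (Sum.inr j) rfl
            simp only [hβ, Function.update_of_ne (by simp : (Sum.inl j : Fin d ⊕ Fin d) ≠ Sum.inr i),
              Function.update_of_ne (by simp [hk] : (Sum.inr j : Fin d ⊕ Fin d) ≠ Sum.inr i)]
            omega
        · exact hadj.elim
  rw [Fintype.sum_sum_type]
  calc ∑ i, α (Sum.inl i) + ∑ i, α (Sum.inr i)
      = ∑ i : Fin d, (α (Sum.inl i) + α (Sum.inr i)) := by rw [Finset.sum_add_distrib]
    _ = ∑ _i : Fin d, n := by exact Finset.sum_congr rfl fun i _ => key i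
    _ = d * n := by simp [Finset.sum_const, Finset.card_fin, mul_comm]
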